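/- Let H be a graph with e(H) edges and let k ≥ 2 be an integer. Suppose there exist graphons W₁,…,W_k with W₁+⋯+W_k = 1 and t(H,W₁)+⋯+t(H,W_k) < k^{-e(H)+1}. Then for every integer ℓ > k there exist graphons W′₁,…,W′_ℓ with W′₁+⋯+W′_ℓ = 1 and t(H,W′₁)+⋯+t(H,W′_ℓ) < ℓ^{-e(H)+1}. (Take W′_i = (k/ℓ)W_i for i ≤ k and W′_i = 1/ℓ otherwise.) That is, if H is not k-common then H is not ℓ-common for any ℓ ≥ k. -/

import Mathlib

open MeasureTheory

noncomputable section

/-- The Lebesgue measure restricted to `[0,1]`. -/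
abbrev muI : Measure ℝ := volume.restrict (Set.Icc 0 1)

/-- A graphon: a symmetric measurable function `[0,1]² → [0,1]`
(represented as a function on `ℝ²`). -/
def IsGraphon (W : ℝ → ℝ → ℝ) : Prop :=
  Measurable (Function.uncurry W) ∧ (∀ x y, W x y = W y x) ∧
    (∀ x y, W x y ∈ Set.Icc (0:ℝ) 1)

/-- The edges of a graph on `Fin m`, each listed once as an ordered pair. -/
def edgeFinset' {m : ℕ} (G : SimpleGraph (Fin m)) [DecidableRel G.Adj] :
    Finset (Fin m × Fin m) :=
  Finset.univ.filter fun p => p.1 < p.2 ∧ G.Adj p.1 p.2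

/-- The number of edges of `G`. -/
def edgeCount {m : ℕ} (G : SimpleGraph (Fin m)) [DecidableRel G.Adj] : ℕ :=
  (edgeFinset' G).card

/-- The homomorphism density `t(G, W)`. -/
def homDensity {m : ℕ} (G : SimpleGraph (Fin m)) [DecidableRel G.Adj]
    (W : ℝ → ℝ → ℝ) : ℝ :=
  ∫ x : Fin m → ℝ, ∏ p ∈ edgeFinset' G, W (x p.1) (x p.2)
    ∂(Measure.pi fun _ => muI)

/-- The single-edge graph `K₂`. -/
abbrev K2 : SimpleGraph (Fin 2) := ⊤

/-- The complete bipartite graph `K_{a,b}` on `Fin (a+b)`. -/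
def bip (a b : ℕ) : SimpleGraph (Fin (a + b)) where
  Adj i j := (decide (i.val < a)) ≠ (decide (j.val < a))
  symm := ⟨fun _ _ h => h.symm⟩
  loopless := ⟨fun _ h => h rfl⟩

instance (a b : ℕ) : DecidableRel (bip a b).Adj :=
  fun i j => inferInstanceAs (Decidable (_ ≠ _))

/-- The cycle `C_n` on `Fin n` (for `n ≥ 3`). -/
def cyc (n : ℕ) : SimpleGraph (Fin n) where
  Adj i j := i ≠ j ∧ ((i.val + 1) % n = j.val ∨ (j.val + 1) % n = i.val)
  symm := ⟨fun _ _ h => ⟨h.1.symm, h.2.symm⟩⟩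
  loopless := ⟨fun _ h => h.1 rfl⟩

instance (n : ℕ) : DecidableRel (cyc n).Adj :=
  fun i j => inferInstanceAs (Decidable (_ ∧ _))

instance : IsProbabilityMeasure muI :=
  ⟨by rw [Measure.restrict_apply_univ]; simp [Real.volume_Icc]⟩

lemma homDensity_const_mul {m : ℕ} (G : SimpleGraph (Fin m)) [DecidableRel G.Adj]
    (c : ℝ) (W : ℝ → ℝ → ℝ) :
    homDensity G (fun x y => c * W x y) = c ^ edgeCount G * homDensity G W := by
  unfold homDensity edgeCount
  simp_rw [Finset.prod_mul_distrib, Finset.prod_const]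
  exact integral_const_mul _ _

lemma homDensity_const {m : ℕ} (G : SimpleGraph (Fin m)) [DecidableRel G.Adj]
    (c : ℝ) : homDensity G (fun _ _ => c) = c ^ edgeCount G := by
  unfold homDensity edgeCount
  simp [Finset.prod_const, integral_const]

lemma sum_split (k l : ℕ) (hkl : k ≤ l) (A : ℕ → ℝ) (B : ℝ) :
    ∑ i : Fin l, (if i.val < k then A i.val else B)
      = (∑ i ∈ Finset.range k, A i) + (l - k : ℕ) * B := by
  rw [Fin.sum_univ_eq_sum_range (fun i => if i < k then A i else B) l,
    ← Finset.sum_range_add_sum_Ico _ hkl]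
  congr 1
  · exact Finset.sum_congr rfl fun i hi => if_pos (Finset.mem_range.mp hi)
  · rw [Finset.sum_congr rfl fun i hi => if_neg (by
      simpa using (Finset.mem_Ico.mp hi).1.not_gt)]
    simp [Finset.sum_const, Nat.card_Ico]

/-- If H is not k-common, then H is not ℓ-common for any ℓ > k. -/
theorem not_kCommon_mono {m : ℕ} (H : SimpleGraph (Fin m)) [DecidableRel H.Adj]
    (k : ℕ) (hk : 2 ≤ k) (W : Fin k → ℝ → ℝ → ℝ)
    (hW : ∀ i, IsGraphon (W i)) (hsum : ∀ x y, ∑ i, W i x y = 1)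
    (hlt : ∑ i, homDensity H (W i) < (k : ℝ) ^ (1 - (edgeCount H : ℤ)))
    (l : ℕ) (hl : k < l) :
    ∃ W' : Fin l → ℝ → ℝ → ℝ, (∀ i, IsGraphon (W' i)) ∧
      (∀ x y, ∑ i, W' i x y = 1) ∧
      ∑ i, homDensity H (W' i) < (l : ℝ) ^ (1 - (edgeCount H : ℤ)) := by
  have hk0 : (0:ℝ) < k := by positivity
  have hl0 : (0:ℝ) < l := by exact_mod_cast Nat.zero_lt_of_lt hl
  have hkl : k ≤ l := hl.le
  have hkl' : (k:ℝ) ≤ l := by exact_mod_cast hkl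
  set e := edgeCount H with he
  -- extend W to ℕ
  set g : ℕ → ℝ → ℝ → ℝ := fun i => if h : i < k then W ⟨i, h⟩ else fun _ _ => 0 with hg
  set W' : Fin l → ℝ → ℝ → ℝ :=
    fun i => if i.val < k then (fun x y => ((k:ℝ)/l) * g i.val x y)
      else (fun _ _ => 1/(l:ℝ)) with hW'
  have hcmem : (0:ℝ) ≤ (k:ℝ)/l ∧ (k:ℝ)/l ≤ 1 :=
    ⟨by positivity, by rw [div_le_one hl0]; exact hkl'⟩
  refine ⟨W', ?_, ?_, ?_⟩
  · intro i
    by_cases hi : i.val < k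
    · have hWi := hW ⟨i.val, hi⟩
      have hgi : g i.val = W ⟨i.val, hi⟩ := dif_pos hi
      simp only [hW', if_pos hi, hgi]
      refine ⟨?_, fun x y => by dsimp only; rw [hWi.2.1 x y], fun x y => ?_⟩
      · exact measurable_const.mul hWi.1
      · have := hWi.2.2 x y
        exact ⟨mul_nonneg hcmem.1 this.1, mul_le_one₀ hcmem.2 this.1 this.2⟩
    · simp only [hW', if_neg hi]
      refine ⟨measurable_const, fun _ _ => rfl, fun _ _ => ?_⟩
      constructor
      · positivity
      · rw [div_le_one hl0]; exact_mod_cast Nat.one_le_iff_ne_zero.mpr (by omega)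
  · intro x y
    have h1 : ∀ i : Fin l, W' i x y =
        if i.val < k then ((k:ℝ)/l) * g i.val x y else 1/(l:ℝ) := by
      intro i; by_cases hi : i.val < k <;> simp [hW', hi]
    rw [Finset.sum_congr rfl fun i _ => h1 i,
      sum_split k l hkl (fun i => ((k:ℝ)/l) * g i x y) (1/(l:ℝ))]
    have h2 : ∑ i ∈ Finset.range k, ((k:ℝ)/l) * g i x y = (k:ℝ)/l := by
      rw [← Finset.mul_sum]
      have h3 : ∑ i ∈ Finset.range k, g i x y = 1 := by
        rw [← Fin.sum_univ_eq_sum_range (fun i => g i x y) k]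
        rw [Finset.sum_congr rfl fun (i : Fin k) _ =>
          show g i.val x y = W i x y by simp [hg, i.isLt]]
        exact hsum x y
      rw [h3, mul_one]
    rw [h2]
    have : ((l - k : ℕ) : ℝ) = (l:ℝ) - k := by push_cast [Nat.cast_sub hkl]; ring
    rw [this]
    field_simp
    ring
  · have h1 : ∀ i : Fin l, homDensity H (W' i) =
        if i.val < k then ((k:ℝ)/l) ^ e * homDensity H (g i.val)
          else (1/(l:ℝ)) ^ e := by
      intro i
      by_cases hi : i.val < k
      · simp only [hW', if_pos hi]
        exact homDensity_const_mul H _ _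
      · simp only [hW', if_neg hi]
        exact homDensity_const H _
    rw [Finset.sum_congr rfl fun i _ => h1 i,
      sum_split k l hkl (fun i => ((k:ℝ)/l) ^ e * homDensity H (g i)) ((1/(l:ℝ)) ^ e)]
    have hS : ∑ i ∈ Finset.range k, ((k:ℝ)/l) ^ e * homDensity H (g i)
        = ((k:ℝ)/l) ^ e * ∑ i, homDensity H (W i) := by
      rw [← Finset.mul_sum]
      congr 1
      rw [← Fin.sum_univ_eq_sum_range (fun i => homDensity H (g i)) k]
      exact Finset.sum_congr rfl fun (i : Fin k) _ =>
        show homDensity H (g i.val) = homDensity H (W i) by simp [hg, i.isLt]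
    rw [hS]
    have hke : (0:ℝ) < (k:ℝ) ^ e := by positivity
    have hle : (0:ℝ) < (l:ℝ) ^ e := by positivity
    have hzk : (k : ℝ) ^ (1 - (e:ℤ)) = (k:ℝ) / (k:ℝ) ^ e := by
      rw [zpow_sub₀ (ne_of_gt hk0), zpow_one, zpow_natCast]
    have hzl : (l : ℝ) ^ (1 - (e:ℤ)) = (l:ℝ) / (l:ℝ) ^ e := by
      rw [zpow_sub₀ (ne_of_gt hl0), zpow_one, zpow_natCast]
    rw [hzl]
    rw [hzk] at hlt
    set S := ∑ i, homDensity H (W i) with hSdef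
    have hkS : (k:ℝ) ^ e * S < k := by
      have := mul_lt_mul_of_pos_left hlt hke
      rwa [mul_div_cancel₀ _ (ne_of_gt hke)] at this
    have hlk : ((l - k : ℕ) : ℝ) = (l:ℝ) - k := by push_cast [Nat.cast_sub hkl]; ring
    have e1 : ((k:ℝ)/l)^e * S = ((k:ℝ)^e * S)/(l:ℝ)^e := by rw [div_pow]; ring
    have e2 : ((l:ℝ)-(k:ℝ)) * (1/(l:ℝ))^e = ((l:ℝ)-(k:ℝ))/(l:ℝ)^e := by
      rw [div_pow, one_pow]; ring
    rw [hlk, e1, e2, ← add_div]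
    exact (div_lt_div_iff₀ hle hle).mpr (by nlinarith)
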